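/- Let r ≥ 2 be an integer, let y ∈ (0,1), and set M = ∑_{i=0}^{r-1} y^i (so M = g_r^r(1-y)). Then ∫_0^{1-y} (g_r^r(x) - M)/(1-x)^2 dx = y^{r-1} - 1 - log(y) + ∑_{i=1}^{r-2} (1-y^i)/i; in particular this integral is at least y^{r-1} - 1 - log(y). -/

import Mathlib

open Finset

lemma sum_split_aux (r : ℕ) (hr : 2 ≤ r) (u : ℝ) :
    ∑ i ∈ Finset.range r, u ^ i = 1 + u + ∑ j ∈ Finset.Icc 1 (r - 2), u ^ (j + 1) := by
  induction r, hr using Nat.le_induction with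
  | base => simp [Finset.sum_range_succ]
  | succ n hn ih =>
      rw [Finset.sum_range_succ, ih]
      have h1 : n + 1 - 2 = n - 2 + 1 := by omega
      have h2 : Finset.Icc 1 (n - 2 + 1) = insert (n - 2 + 1) (Finset.Icc 1 (n - 2)) := by
        ext k
        simp only [Finset.mem_Icc, Finset.mem_insert]
        omega
      have h3 : n - 2 + 1 + 1 = n := by omega
      rw [h1, h2, Finset.sum_insert (by simp), h3]
      ring

/-- For an integer `r ≥ 2`, `y ∈ (0,1)` and `M = ∑_{i=0}^{r-1} y^i = g_r^r(1-y)`,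
`∫_0^{1-y} (g_r^r(x) - M)/(1-x)^2 dx = y^(r-1) - 1 - log y + ∑_{i=1}^{r-2} (1-y^i)/i`,
and in particular this integral is at least `y^(r-1) - 1 - log y`. -/
theorem integral_grr_sub_M (r : ℕ) (hr : 2 ≤ r) (y : ℝ) (hy : y ∈ Set.Ioo (0 : ℝ) 1)
    (M : ℝ) (hM : M = ∑ i ∈ Finset.range r, y ^ i) :
    (∫ x in (0:ℝ)..(1 - y), ((∑ i ∈ Finset.range r, (1 - x) ^ i) - M) / (1 - x) ^ 2)
        = y ^ (r - 1) - 1 - Real.log y + ∑ i ∈ Finset.Icc 1 (r - 2), (1 - y ^ i) / (i : ℝ) ∧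
      y ^ (r - 1) - 1 - Real.log y ≤
        ∫ x in (0:ℝ)..(1 - y), ((∑ i ∈ Finset.range r, (1 - x) ^ i) - M) / (1 - x) ^ 2 := by
  obtain ⟨hy0, hy1⟩ := hy
  have hb : (0:ℝ) ≤ 1 - y := by linarith
  have huIcc : Set.uIcc (0:ℝ) (1 - y) = Set.Icc 0 (1 - y) := Set.uIcc_of_le hb
  set f : ℝ → ℝ := fun x => ((∑ i ∈ Finset.range r, (1 - x) ^ i) - M) / (1 - x) ^ 2 with hf
  set φ : ℝ → ℝ := fun x =>
    1 / (1 - x) - Real.log (1 - x) - (∑ j ∈ Finset.Icc 1 (r - 2), (1 - x) ^ j / (j : ℝ))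
      - M / (1 - x) with hφ
  -- positivity of 1 - x on the interval
  have hpos : ∀ x ∈ Set.uIcc (0:ℝ) (1 - y), 0 < 1 - x := by
    intro x hx
    rw [huIcc] at hx
    obtain ⟨_, hx2⟩ := hx
    linarith
  -- derivative
  have hderiv : ∀ x ∈ Set.uIcc (0:ℝ) (1 - y), HasDerivAt φ (f x) x := by
    intro x hx
    have hu : 0 < 1 - x := hpos x hx
    have hu' : (1 - x) ≠ 0 := hu.ne'
    have h1 : HasDerivAt (fun x : ℝ => 1 - x) (-1) x := by
      simpa using (hasDerivAt_id x).const_sub 1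
    have hinv : HasDerivAt (fun x : ℝ => (1 - x)⁻¹) (-(-1) / (1 - x) ^ 2) x := h1.inv hu'
    have hlog : HasDerivAt (fun x : ℝ => Real.log (1 - x)) ((-1) / (1 - x)) x := h1.log hu'
    have hsum : HasDerivAt
        (fun x : ℝ => ∑ j ∈ Finset.Icc 1 (r - 2), (1 - x) ^ j / (j : ℝ))
        (∑ j ∈ Finset.Icc 1 (r - 2), ((j : ℝ) * (1 - x) ^ (j - 1) * (-1)) / (j : ℝ)) x := by
      exact HasDerivAt.fun_sum fun j _ => (h1.pow j).div_const (j : ℝ)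
    have hMder : HasDerivAt (fun x : ℝ => M / (1 - x)) (M * (-(-1) / (1 - x) ^ 2)) x := by
      simpa [div_eq_mul_inv] using hinv.const_mul M
    have hφd : HasDerivAt φ
        ((-(-1) / (1 - x) ^ 2) - ((-1) / (1 - x))
          - (∑ j ∈ Finset.Icc 1 (r - 2), ((j : ℝ) * (1 - x) ^ (j - 1) * (-1)) / (j : ℝ))
          - M * (-(-1) / (1 - x) ^ 2)) x := by
      have := ((hinv.fun_sub hlog).fun_sub hsum).fun_sub hMder
      simpa [hφ, one_div] using this
    convert hφd using 1
    -- now algebra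
    have hsc : ∑ j ∈ Finset.Icc 1 (r - 2), ((j : ℝ) * (1 - x) ^ (j - 1) * (-1)) / (j : ℝ)
        = -∑ j ∈ Finset.Icc 1 (r - 2), (1 - x) ^ (j - 1) := by
      rw [← Finset.sum_neg_distrib]
      refine Finset.sum_congr rfl fun j hj => ?_
      have hj1 : 1 ≤ j := (Finset.mem_Icc.mp hj).1
      have : (j : ℝ) ≠ 0 := Nat.cast_ne_zero.mpr (by omega)
      field_simp
    simp only [hf]
    rw [hsc, sum_split_aux r hr (1 - x)]
    have hss : ∑ j ∈ Finset.Icc 1 (r - 2), (1 - x) ^ (j + 1)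
        = (1 - x) ^ 2 * ∑ j ∈ Finset.Icc 1 (r - 2), (1 - x) ^ (j - 1) := by
      rw [Finset.mul_sum]
      refine Finset.sum_congr rfl fun j hj => ?_
      have hj1 : 1 ≤ j := (Finset.mem_Icc.mp hj).1
      rw [← pow_add]
      congr 1
      omega
    rw [hss]
    field_simp
    ring
  -- continuity / integrability
  have hcont : ContinuousOn f (Set.uIcc 0 (1 - y)) := by
    apply ContinuousOn.div
    · apply ContinuousOn.sub _ continuousOn_const
      exact continuousOn_finset_sum _ fun i _ => (ContinuousOn.pow (by fun_prop) i)
    · fun_prop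
    · intro x hx
      exact pow_ne_zero 2 (hpos x hx).ne'
  have hint : (∫ x in (0:ℝ)..(1 - y), f x) = φ (1 - y) - φ 0 :=
    intervalIntegral.integral_eq_sub_of_hasDerivAt hderiv (hcont.intervalIntegrable)
  have hval : φ (1 - y) - φ 0
      = y ^ (r - 1) - 1 - Real.log y + ∑ i ∈ Finset.Icc 1 (r - 2), (1 - y ^ i) / (i : ℝ) := by
    have hy0' : y ≠ 0 := hy0.ne'
    have hgeom : M * (y - 1) = y ^ r - 1 := by rw [hM]; exact geom_sum_mul y r
    have hyr : y ^ r = y ^ (r - 1) * y := by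
      rw [← pow_succ]; congr 1; omega
    have hsplit : ∑ i ∈ Finset.Icc 1 (r - 2), (1 - y ^ i) / (i : ℝ)
        = (∑ i ∈ Finset.Icc 1 (r - 2), 1 / (i : ℝ))
          - ∑ i ∈ Finset.Icc 1 (r - 2), y ^ i / (i : ℝ) := by
      rw [← Finset.sum_sub_distrib]
      exact Finset.sum_congr rfl fun i _ => by rw [sub_div]
    simp only [hφ]
    have e1 : (1:ℝ) - (1 - y) = y := by ring
    rw [e1, hsplit]
    simp only [sub_zero, Real.log_one, one_pow, div_one, one_div]
    have key : y⁻¹ - M / y - (1 - M) = y ^ (r - 1) - 1 := by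
      rw [hyr] at hgeom
      field_simp
      linarith [hgeom]
    linarith [key]
  have hineq : 0 ≤ ∑ i ∈ Finset.Icc 1 (r - 2), (1 - y ^ i) / (i : ℝ) := by
    apply Finset.sum_nonneg
    intro i hi
    have hi1 : 1 ≤ i := (Finset.mem_Icc.mp hi).1
    apply div_nonneg
    · have : y ^ i ≤ 1 := pow_le_one₀ hy0.le hy1.le
      linarith
    · positivity
  refine ⟨hint.trans hval, ?_⟩
  rw [hint, hval]
  linarith
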